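/- arXiv:2310.04265 — 2 statements merged into one kernel-verified Lean document; each statement's English description precedes it below -/
import Mathlib

section
/- If H₁ and H₂ are two χ⃗-binding tournaments, then the tournament H₁ ⇒ H₂ is also χ⃗-binding. -/
structure Dig (V : Type*) where
  Adj : V → V → Prop
  irrefl : ∀ v, ¬ Adj v v
  asymm : ∀ u v, Adj u v → ¬ Adj v u

structure Tournament (V : Type*) extends Dig V where
  total : ∀ u v, u ≠ v → Adj u v ∨ Adj v u

variable {V : Type*}

/-- The backedge graph of a digraph with respect to a (strict total) order `r`:
`u` and `v` are adjacent iff the arc between them goes backwards with respect to `r`. -/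
def Dig.backedge (D : Dig V) (r : V → V → Prop) : SimpleGraph V where
  Adj u v := (r u v ∧ D.Adj v u) ∨ (r v u ∧ D.Adj u v)
  symm := ⟨by intro u v h; tauto⟩
  loopless := ⟨by intro v h; rcases h with ⟨_, h⟩ | ⟨_, h⟩ <;> exact D.irrefl v h⟩

/-- The clique number of an undirected graph. -/
noncomputable def gOmega (G : SimpleGraph V) : ℕ :=
  sSup {n | ∃ s : Finset V, G.IsNClique n s}

/-- The chromatic number of an undirected graph (as a natural number). -/
noncomputable def gChi (G : SimpleGraph V) : ℕ :=
  sInf {n | G.Colorable n}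

/-- The sub-digraph induced on `S` is acyclic: there is no directed cycle inside `S`. -/
def Dig.AcyclicOn (D : Dig V) (S : Set V) : Prop :=
  ∀ v, ¬ Relation.TransGen (fun x y => x ∈ S ∧ y ∈ S ∧ D.Adj x y) v v

/-- The dichromatic number: the least `n` such that the vertices can be partitioned into
`n` acyclic parts. -/
noncomputable def Dig.dichi (D : Dig V) : ℕ :=
  sInf {n | ∃ c : V → Fin n, ∀ i, D.AcyclicOn {v | c v = i}}

/-- The clique number of a digraph: the minimum over all strict total orders of the
clique number of the associated backedge graph. -/
noncomputable def Dig.cliqueNum (D : Dig V) : ℕ :=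
  sInf {m | ∃ r : V → V → Prop, IsStrictTotalOrder V r ∧ gOmega (D.backedge r) = m}

/-- `T` is `H`-free: no induced subtournament of `T` is isomorphic to `H`. -/
def HFree {W V : Type*} (H : Tournament W) (T : Tournament V) : Prop :=
  ¬ ∃ f : W ↪ V, ∀ a b, H.Adj a b ↔ T.Adj (f a) (f b)

/-- `H` is χ⃗-binding: the class of `H`-free tournaments is χ⃗-bounded. -/
def ChiBinding {W : Type*} (H : Tournament W) : Prop :=
  ∃ f : ℕ → ℕ, ∀ (V : Type) [Fintype V] (T : Tournament V), HFree H T →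
    T.toDig.dichi ≤ f T.toDig.cliqueNum

/-- The tournament `T₁ ⇒ T₂`: disjoint union of `T₁` and `T₂` with all arcs from `T₁` to `T₂`. -/
def Tournament.seq {V₁ V₂ : Type*} (T₁ : Tournament V₁) (T₂ : Tournament V₂) :
    Tournament (V₁ ⊕ V₂) where
  Adj := Sum.Lex T₁.Adj T₂.Adj
  irrefl := by
    rintro (a | a) h
    · rw [Sum.lex_inl_inl] at h; exact T₁.irrefl a h
    · rw [Sum.lex_inr_inr] at h; exact T₂.irrefl a h
  asymm := by
    rintro (a | a) (b | b) h h'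
    · rw [Sum.lex_inl_inl] at h h'; exact T₁.asymm a b h h'
    · exact Sum.lex_inr_inl h'
    · exact Sum.lex_inr_inl h
    · rw [Sum.lex_inr_inr] at h h'; exact T₂.asymm a b h h'
  total := by
    rintro (a | a) (b | b) hne
    · have hab : a ≠ b := fun e => hne (by rw [e])
      exact (T₁.total a b hab).imp Sum.lex_inl_inl.mpr Sum.lex_inl_inl.mpr
    · exact Or.inl (Sum.Lex.sep a b)
    · exact Or.inr (Sum.Lex.sep b a)
    · have hab : a ≠ b := fun e => hne (by rw [e])
      exact (T₂.total a b hab).imp Sum.lex_inr_inr.mpr Sum.lex_inr_inr.mpr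


section AuxProof

variable {V : Type*}

/-- Induced subtournament on a set. -/
def Tournament.induce (T : Tournament V) (S : Set V) : Tournament S where
  Adj a b := T.Adj a b
  irrefl a := T.irrefl a
  asymm a b := T.asymm a b
  total a b h := T.total a b (fun e => h (Subtype.ext e))

lemma not_transGen_of_not {R : V → V → Prop} (h : ∀ x y, ¬ R x y) {a b : V}
    (ht : Relation.TransGen R a b) : False := by
  induction ht with
  | single h' => exact h _ _ h'
  | tail _ h' _ => exact h _ _ h'

lemma Dig.acyclicOn_anti (D : Dig V) {S S' : Set V} (hss : S ⊆ S') (h : D.AcyclicOn S') :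
    D.AcyclicOn S := by
  intro v hv
  refine h v (Relation.TransGen.mono ?_ v v hv)
  rintro x y ⟨hx, hy, ha⟩
  exact ⟨hss hx, hss hy, ha⟩

lemma Dig.acyclicOn_subsingleton (D : Dig V) {S : Set V} (h : S.Subsingleton) :
    D.AcyclicOn S := by
  intro v hv
  refine not_transGen_of_not ?_ hv
  rintro x y ⟨hx, hy, ha⟩
  exact D.irrefl y (h hx hy ▸ ha)

/-- Relative chromatic bound: the vertices of `S` can be coloured with `n` colours
so that each colour class (within `S`) is acyclic. -/
def ChiLeOn (T : Tournament V) (S : Set V) (n : ℕ) : Prop :=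
  ∃ c : V → ℕ, (∀ v ∈ S, c v < n) ∧ ∀ i : ℕ, T.toDig.AcyclicOn {v | v ∈ S ∧ c v = i}

lemma chiLeOn_mono {T : Tournament V} {S S' : Set V} {n : ℕ} (hss : S ⊆ S')
    (h : ChiLeOn T S' n) : ChiLeOn T S n := by
  obtain ⟨c, hb, hc⟩ := h
  refine ⟨c, fun v hv => hb v (hss hv), fun i => T.toDig.acyclicOn_anti ?_ (hc i)⟩
  rintro v ⟨h1, h2⟩
  exact ⟨hss h1, h2⟩

lemma chiLeOn_of_le {T : Tournament V} {S : Set V} {n m : ℕ} (h : ChiLeOn T S n)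
    (hnm : n ≤ m) : ChiLeOn T S m := by
  obtain ⟨c, hb, hc⟩ := h
  exact ⟨c, fun v hv => lt_of_lt_of_le (hb v hv) hnm, hc⟩

lemma chiLeOn_empty (T : Tournament V) (n : ℕ) : ChiLeOn T ∅ n := by
  refine ⟨fun _ => 0, fun _ hv => hv.elim, fun i =>
    T.toDig.acyclicOn_subsingleton ?_⟩
  rintro a ⟨ha, -⟩
  exact ha.elim

lemma chiLeOn_subsingleton {T : Tournament V} {S : Set V} (h : S.Subsingleton) :
    ChiLeOn T S 1 := by
  refine ⟨fun _ => 0, fun _ _ => Nat.one_pos, fun i =>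
    T.toDig.acyclicOn_subsingleton ?_⟩
  rintro a ⟨ha, -⟩ b ⟨hb, -⟩
  exact h ha hb

lemma chiLeOn_union {T : Tournament V} {S₁ S₂ : Set V} {n₁ n₂ : ℕ}
    (h₁ : ChiLeOn T S₁ n₁) (h₂ : ChiLeOn T S₂ n₂) : ChiLeOn T (S₁ ∪ S₂) (n₁ + n₂) := by
  classical
  obtain ⟨c₁, hb₁, ha₁⟩ := h₁
  obtain ⟨c₂, hb₂, ha₂⟩ := h₂
  refine ⟨fun v => if v ∈ S₁ then c₁ v else n₁ + c₂ v, ?_, ?_⟩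
  · intro v hv
    by_cases h : v ∈ S₁
    · simp only [if_pos h]
      exact lt_of_lt_of_le (hb₁ v h) (Nat.le_add_right _ _)
    · simp only [if_neg h]
      exact Nat.add_lt_add_left (hb₂ v (hv.resolve_left h)) n₁
  · intro i
    by_cases hi : i < n₁
    · refine T.toDig.acyclicOn_anti ?_ (ha₁ i)
      rintro v ⟨hv, hc⟩
      simp only at hc
      by_cases h : v ∈ S₁
      · rw [if_pos h] at hc
        exact ⟨h, hc⟩
      · rw [if_neg h] at hc
        omega
    · refine T.toDig.acyclicOn_anti ?_ (ha₂ (i - n₁))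
      rintro v ⟨hv, hc⟩
      simp only at hc
      by_cases h : v ∈ S₁
      · rw [if_pos h] at hc
        have := hb₁ v h
        omega
      · rw [if_neg h] at hc
        exact ⟨hv.resolve_left h, by omega⟩

lemma chiLeOn_biUnion {ι : Type*} [DecidableEq ι] {T : Tournament V} (Q : ι → Set V) (n : ι → ℕ) :
    ∀ s : Finset ι, (∀ a ∈ s, ChiLeOn T (Q a) (n a)) →
      ChiLeOn T (⋃ a ∈ s, Q a) (∑ a ∈ s, n a) := by
  intro s
  induction s using Finset.induction with
  | empty => intro _; simpa using chiLeOn_empty T 0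
  | @insert a t hat ih =>
    intro h
    rw [Finset.set_biUnion_insert, Finset.sum_insert hat]
    exact chiLeOn_union (h a (Finset.mem_insert_self a t))
      (ih fun b hb => h b (Finset.mem_insert_of_mem hb))

lemma transGen_subtype {S : Set V} {R : V → V → Prop} {R' : S → S → Prop}
    (hmem : ∀ {x y}, R x y → x ∈ S ∧ y ∈ S)
    (hlift : ∀ x y (hx : x ∈ S) (hy : y ∈ S), R x y → R' ⟨x, hx⟩ ⟨y, hy⟩)
    {a b : V} (h : Relation.TransGen R a b) :
    ∃ (ha : a ∈ S) (hb : b ∈ S), Relation.TransGen R' ⟨a, ha⟩ ⟨b, hb⟩ := by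
  induction h with
  | single h' => exact ⟨(hmem h').1, (hmem h').2, .single (hlift _ _ _ _ h')⟩
  | tail _ h₂ ih =>
    obtain ⟨ha, hb, t⟩ := ih
    exact ⟨ha, (hmem h₂).2, t.tail (hlift _ _ hb _ h₂)⟩

end AuxProof

section AuxProof2

variable {V : Type*}

lemma chiLeOn_of_induce [Fintype V] (T : Tournament V) (S : Set V) :
    ChiLeOn T S ((T.induce S).toDig.dichi) := by
  classical
  have hne : {n | ∃ c : S → Fin n, ∀ i, (T.induce S).toDig.AcyclicOn {v | c v = i}}.Nonempty := by
    haveI : Fintype S := Fintype.ofFinite _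
    refine ⟨Fintype.card S, fun u => (Fintype.equivFin S) u, fun i => ?_⟩
    refine (T.induce S).toDig.acyclicOn_subsingleton ?_
    intro a ha b hb
    exact (Fintype.equivFin S).injective (ha.trans hb.symm)
  obtain ⟨c, hc⟩ : ∃ c : S → Fin ((T.induce S).toDig.dichi),
      ∀ i, (T.induce S).toDig.AcyclicOn {v | c v = i} := Nat.sInf_mem hne
  refine ⟨fun v => if h : v ∈ S then (c ⟨v, h⟩ : ℕ) else 0, ?_, ?_⟩
  · intro v hv
    simp only
    rw [dif_pos hv]
    exact (c ⟨v, hv⟩).isLt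
  · intro i
    by_cases hi : i < (T.induce S).toDig.dichi
    · intro v hv
      have hmem : ∀ {x y : V}, (x ∈ {v | v ∈ S ∧ (fun v => if h : v ∈ S then (c ⟨v, h⟩ : ℕ) else 0) v = i}
          ∧ y ∈ {v | v ∈ S ∧ (fun v => if h : v ∈ S then (c ⟨v, h⟩ : ℕ) else 0) v = i} ∧ T.toDig.Adj x y) →
          x ∈ S ∧ y ∈ S := by
        rintro x y ⟨⟨hx, -⟩, ⟨hy, -⟩, -⟩
        exact ⟨hx, hy⟩
      have hlift : ∀ (x y : V) (hx : x ∈ S) (hy : y ∈ S),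
          (x ∈ {v | v ∈ S ∧ (fun v => if h : v ∈ S then (c ⟨v, h⟩ : ℕ) else 0) v = i}
          ∧ y ∈ {v | v ∈ S ∧ (fun v => if h : v ∈ S then (c ⟨v, h⟩ : ℕ) else 0) v = i} ∧ T.toDig.Adj x y) →
          (⟨x, hx⟩ : S) ∈ {u : S | c u = ⟨i, hi⟩} ∧ (⟨y, hy⟩ : S) ∈ {u : S | c u = ⟨i, hi⟩}
          ∧ (T.induce S).toDig.Adj ⟨x, hx⟩ ⟨y, hy⟩ := by
        rintro x y hx hy ⟨⟨hx', hcx⟩, ⟨hy', hcy⟩, hadj⟩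
        simp only at hcx hcy
        rw [dif_pos hx'] at hcx
        rw [dif_pos hy'] at hcy
        exact ⟨Fin.ext hcx, Fin.ext hcy, hadj⟩
      obtain ⟨ha, hb, t⟩ := transGen_subtype (S := S)
        (R' := fun u w => u ∈ {u : S | c u = ⟨i, hi⟩} ∧ w ∈ {u : S | c u = ⟨i, hi⟩}
          ∧ (T.induce S).toDig.Adj u w) hmem hlift hv
      exact hc ⟨i, hi⟩ ⟨v, ha⟩ t
    · refine T.toDig.acyclicOn_subsingleton ?_
      rintro a ⟨ha, hca⟩ b hb
      exfalso
      simp only at hca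
      rw [dif_pos ha] at hca
      exact hi (hca ▸ (c ⟨a, ha⟩).isLt)

lemma dichi_le_of_chiLeOn_univ {T : Tournament V} {n : ℕ} (h : ChiLeOn T Set.univ n) :
    T.toDig.dichi ≤ n := by
  obtain ⟨c, hb, hc⟩ := h
  refine Nat.sInf_le ⟨fun v => ⟨c v, hb v (Set.mem_univ v)⟩, fun i => ?_⟩
  refine T.toDig.acyclicOn_anti ?_ (hc i.val)
  intro v hv
  exact ⟨Set.mem_univ v, congrArg Fin.val hv⟩

lemma le_gOmega [Fintype V] {G : SimpleGraph V} {n : ℕ} {s : Finset V}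
    (h : G.IsNClique n s) : n ≤ gOmega G := by
  apply le_csSup
  · refine ⟨Fintype.card V, ?_⟩
    rintro m ⟨t, ht⟩
    rw [← ht.card_eq]
    exact Finset.card_le_univ t
  · exact ⟨s, h⟩

lemma gOmega_le {G : SimpleGraph V} {k : ℕ}
    (h : ∀ (n : ℕ) (s : Finset V), G.IsNClique n s → n ≤ k) : gOmega G ≤ k := by
  apply csSup_le
  · exact ⟨0, ∅, SimpleGraph.isNClique_empty.mpr rfl⟩
  · rintro n ⟨s, hs⟩
    exact h n s hs

lemma sto_swap {r : V → V → Prop} (hr : IsStrictTotalOrder V r) :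
    IsStrictTotalOrder V (Function.swap r) := by
  letI := hr
  refine { trichotomous := ?_, irrefl := fun a => irrefl_of r a,
           trans := fun a b c h₁ h₂ => trans_of r h₂ h₁ }
  intro a b
  rcases trichotomous_of r a b with h | h | h
  · exact fun _ h' => absurd h h'
  · exact fun _ _ => h
  · exact fun h' _ => absurd h h'

lemma sto_subtype {r : V → V → Prop} (hr : IsStrictTotalOrder V r) (S : Set V) :
    IsStrictTotalOrder S (fun u v : S => r u v) := by
  letI := hr
  refine { trichotomous := ?_, irrefl := fun a => irrefl_of r (a : V),
           trans := fun a b c h₁ h₂ => trans_of r h₁ h₂ }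
  intro a b
  rcases trichotomous_of r (a : V) (b : V) with h | h | h
  · exact fun h' _ => absurd h h'
  · exact fun _ _ => Subtype.ext h
  · exact fun _ h' => absurd h h'

lemma exists_sto (V : Type*) [Fintype V] : ∃ r : V → V → Prop, IsStrictTotalOrder V r := by
  refine ⟨fun u v => Fintype.equivFin V u < Fintype.equivFin V v,
    { trichotomous := ?_, irrefl := fun a => lt_irrefl _,
      trans := fun a b c h₁ h₂ => lt_trans h₁ h₂ }⟩
  intro a b
  rcases lt_trichotomy (Fintype.equivFin V a) (Fintype.equivFin V b) with h | h | h
  · exact fun h' _ => absurd h h'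
  · exact fun _ _ => (Fintype.equivFin V).injective h
  · exact fun _ h' => absurd h h'

lemma exists_rmin {r : V → V → Prop} (hr : IsStrictTotalOrder V r) :
    ∀ s : Finset V, s.Nonempty → ∃ x ∈ s, ∀ y ∈ s, y ≠ x → r x y := by
  classical
  letI := hr
  intro s
  induction s using Finset.induction with
  | empty => intro h; simp at h
  | @insert a t hat ih =>
    intro _
    rcases t.eq_empty_or_nonempty with rfl | htne
    · refine ⟨a, Finset.mem_insert_self a _, ?_⟩
      intro y hy hne
      rcases Finset.mem_insert.mp hy with rfl | h
      · exact absurd rfl hne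
      · exact absurd h (Finset.notMem_empty y)
    · obtain ⟨m, hm, hmin⟩ := ih htne
      rcases trichotomous_of r a m with h | h | h
      · refine ⟨a, Finset.mem_insert_self a _, ?_⟩
        intro y hy hne
        rcases Finset.mem_insert.mp hy with rfl | hyt
        · exact absurd rfl hne
        · by_cases hym : y = m
          · exact hym ▸ h
          · exact trans_of r h (hmin y hyt hym)
      · subst h
        exact ⟨a, Finset.mem_insert_self a _, fun y hy hne =>
          (Finset.mem_insert.mp hy).elim (fun e => absurd e hne) (fun hyt => hmin y hyt hne)⟩
      · refine ⟨m, Finset.mem_insert_of_mem hm, ?_⟩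
        intro y hy hne
        rcases Finset.mem_insert.mp hy with rfl | hyt
        · exact h
        · exact hmin y hyt hne

lemma exists_rmax {r : V → V → Prop} (hr : IsStrictTotalOrder V r) (s : Finset V)
    (hs : s.Nonempty) : ∃ x ∈ s, ∀ y ∈ s, y ≠ x → r y x := by
  obtain ⟨x, hx, h⟩ := exists_rmin (sto_swap hr) s hs
  exact ⟨x, hx, fun y hy hne => h y hy hne⟩

end AuxProof2

section AuxProof3

variable {V : Type*}

lemma cliqueNum_restrict_le [Fintype V] (T : Tournament V) (S : Set V) {r : V → V → Prop}
    (hr : IsStrictTotalOrder V r) :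
    (T.induce S).toDig.cliqueNum ≤ gOmega (T.toDig.backedge r) := by
  classical
  have hmem : gOmega ((T.induce S).toDig.backedge (fun u v : S => r u v)) ∈
      {m | ∃ rr : S → S → Prop, IsStrictTotalOrder S rr ∧
        gOmega ((T.induce S).toDig.backedge rr) = m} := ⟨_, sto_subtype hr S, rfl⟩
  refine le_trans (Nat.sInf_le hmem) ?_
  refine csSup_le ⟨0, ∅, SimpleGraph.isNClique_empty.mpr rfl⟩ ?_
  rintro n ⟨s, hs⟩
  refine le_gOmega (G := T.toDig.backedge r)
    (s := s.map (Function.Embedding.subtype _)) ⟨?_, ?_⟩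
  · intro x hx y hy hxy
    simp only [Finset.coe_map, Set.mem_image, Finset.mem_coe,
      Function.Embedding.coe_subtype] at hx hy
    obtain ⟨u, hu, rfl⟩ := hx
    obtain ⟨w, hw, rfl⟩ := hy
    have huw : u ≠ w := fun e => hxy (by rw [e])
    exact hs.isClique hu hw huw
  · rw [Finset.card_map]
    exact hs.card_eq

lemma cliqueNum_dom_lt [Fintype V] (T : Tournament V) (S : Set V) {r : V → V → Prop}
    (hr : IsStrictTotalOrder V r) (c : V) (hdom : ∀ v ∈ S, T.Adj v c ∧ r c v) :
    (T.induce S).toDig.cliqueNum < gOmega (T.toDig.backedge r) := by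
  classical
  haveI : Fintype S := Fintype.ofFinite _
  have h1 : (T.induce S).toDig.cliqueNum ≤
      gOmega ((T.induce S).toDig.backedge (fun u v : S => r u v)) :=
    Nat.sInf_le ⟨_, sto_subtype hr S, rfl⟩
  have hbdd : BddAbove {n | ∃ s : Finset S,
      ((T.induce S).toDig.backedge (fun u v : S => r u v)).IsNClique n s} := by
    refine ⟨Fintype.card S, ?_⟩
    rintro m ⟨t, ht⟩
    rw [← ht.card_eq]
    exact Finset.card_le_univ t
  have hsne : {n | ∃ s : Finset S,
      ((T.induce S).toDig.backedge (fun u v : S => r u v)).IsNClique n s}.Nonempty :=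
    ⟨0, ∅, SimpleGraph.isNClique_empty.mpr rfl⟩
  obtain ⟨s, hs⟩ : ∃ s : Finset S, ((T.induce S).toDig.backedge (fun u v : S => r u v)).IsNClique
      (gOmega ((T.induce S).toDig.backedge (fun u v : S => r u v))) s :=
    Nat.sSup_mem hsne hbdd
  have hcnot : c ∉ s.map (Function.Embedding.subtype _) := by
    intro hmem
    obtain ⟨u, hu, he⟩ := Finset.mem_map.mp hmem
    have := (hdom (u : V) u.2).1
    rw [show ((Function.Embedding.subtype _) u : V) = (u : V) from rfl] at he
    rw [he] at this
    exact T.toDig.irrefl c this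
  have hlift : (T.toDig.backedge r).IsNClique
      (gOmega ((T.induce S).toDig.backedge (fun u v : S => r u v)) + 1)
      (insert c (s.map (Function.Embedding.subtype _))) := by
    constructor
    · intro x hx y hy hxy
      simp only [Finset.coe_insert, Set.mem_insert_iff, Finset.coe_map, Set.mem_image,
        Finset.mem_coe, Function.Embedding.coe_subtype] at hx hy
      rcases hx with rfl | ⟨u, hu, rfl⟩
      · rcases hy with rfl | ⟨w, hw, rfl⟩
        · exact absurd rfl hxy
        · exact Or.inl ⟨(hdom (w : V) w.2).2, (hdom (w : V) w.2).1⟩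
      · rcases hy with rfl | ⟨w, hw, rfl⟩
        · exact Or.inr ⟨(hdom (u : V) u.2).2, (hdom (u : V) u.2).1⟩
        · have huw : u ≠ w := fun e => hxy (by rw [e])
          exact hs.isClique hu hw huw
    · rw [Finset.card_insert_of_notMem hcnot, Finset.card_map, hs.card_eq]
  have h2 := le_gOmega hlift
  omega

lemma HFree.induce {W : Type*} {H : Tournament W} {T : Tournament V} (h : HFree H T)
    (S : Set V) : HFree H (T.induce S) := by
  rintro ⟨f, hf⟩
  exact h ⟨f.trans (Function.Embedding.subtype _), fun a b => hf a b⟩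

lemma hfree_dominated {W₁ W₂ : Type*} (H₁ : Tournament W₁) (H₂ : Tournament W₂)
    {T : Tournament V} (hf : HFree (H₁.seq H₂) T) (E : W₁ ↪ V)
    (hE : ∀ a b, H₁.Adj a b ↔ T.Adj (E a) (E b)) :
    HFree H₂ (T.induce {v | ∀ a, T.Adj (E a) v}) := by
  rintro ⟨e₂, he₂⟩
  have hM : ∀ b a, T.Adj (E a) (e₂ b : V) := fun b a => (e₂ b).2 a
  have hinj : Function.Injective (Sum.elim (fun a => E a) (fun b => (e₂ b : V))) := by
    rintro (a | b) (a' | b') h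
    · rw [E.injective h]
    · have h' : E a = (e₂ b' : V) := h
      exact absurd (h' ▸ hM b' a) (T.toDig.irrefl _)
    · have h' : E a' = (e₂ b : V) := h.symm
      exact absurd (h' ▸ hM b a') (T.toDig.irrefl _)
    · rw [e₂.injective (Subtype.ext h)]
  refine hf ⟨⟨Sum.elim (fun a => E a) (fun b => (e₂ b : V)), hinj⟩, ?_⟩
  rintro (a | b) (a' | b')
  · constructor
    · intro h
      rw [show (H₁.seq H₂).Adj (Sum.inl a) (Sum.inl a') = Sum.Lex H₁.Adj H₂.Adj
        (Sum.inl a) (Sum.inl a') from rfl, Sum.lex_inl_inl] at h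
      exact (hE a a').mp h
    · intro h
      exact Sum.lex_inl_inl.mpr ((hE a a').mpr h)
  · constructor
    · intro _
      exact hM b' a
    · intro _
      exact Sum.Lex.sep a b'
  · constructor
    · intro h
      exact absurd h Sum.lex_inr_inl
    · intro h
      exact absurd (hM b a') (T.toDig.asymm _ _ h)
  · constructor
    · intro h
      exact (he₂ b b').mp (Sum.lex_inr_inr.mp h)
    · intro h
      exact Sum.lex_inr_inr.mpr ((he₂ b b').mpr h)

/-- The recursive bound. -/
def Fb (f₁ f₂ : ℕ → ℕ) (h : ℕ) : ℕ → ℕ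
  | 0 => 0
  | (w+1) => f₁ (w+1) + f₂ (w+1) + 1 + (h+1) * Fb f₁ f₂ h w

lemma Fb_le_succ (f₁ f₂ : ℕ → ℕ) (h w : ℕ) : Fb f₁ f₂ h w ≤ Fb f₁ f₂ h (w+1) := by
  have h1 : Fb f₁ f₂ h w ≤ (h+1) * Fb f₁ f₂ h w := Nat.le_mul_of_pos_left _ (Nat.succ_pos h)
  simp only [Fb]
  omega

end AuxProof3

section MainProof

theorem key_bound {W₁ W₂ : Type} [Fintype W₁] [Fintype W₂]
    (H₁ : Tournament W₁) (H₂ : Tournament W₂) (f₁ f₂ : ℕ → ℕ)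
    (hm₁ : ∀ {k n : ℕ}, k ≤ n → f₁ k ≤ f₁ n) (hm₂ : ∀ {k n : ℕ}, k ≤ n → f₂ k ≤ f₂ n)
    (hb₁ : ∀ (V : Type) [Fintype V] (T : Tournament V), HFree H₁ T →
      T.toDig.dichi ≤ f₁ T.toDig.cliqueNum)
    (hb₂ : ∀ (V : Type) [Fintype V] (T : Tournament V), HFree H₂ T →
      T.toDig.dichi ≤ f₂ T.toDig.cliqueNum) :
    ∀ (w : ℕ) (V : Type) [Fintype V] (T : Tournament V), HFree (H₁.seq H₂) T →
      T.toDig.cliqueNum ≤ w → T.toDig.dichi ≤ Fb f₁ f₂ (Fintype.card W₁) w := by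
  intro w
  induction w with
  | zero =>
    intro V iV T hfree hw
    haveI : IsEmpty V := by
      by_contra hne
      rw [not_isEmpty_iff] at hne
      obtain ⟨v⟩ := hne
      have hset : {m | ∃ r : V → V → Prop, IsStrictTotalOrder V r ∧
          gOmega (T.toDig.backedge r) = m}.Nonempty := by
        obtain ⟨r, hr⟩ := exists_sto V
        exact ⟨_, r, hr, rfl⟩
      obtain ⟨r, hr, hgr⟩ := Nat.sInf_mem hset
      have hgr' : gOmega (T.toDig.backedge r) = T.toDig.cliqueNum := hgr
      have h1 : (1 : ℕ) ≤ gOmega (T.toDig.backedge r) :=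
        le_gOmega (s := {v}) (SimpleGraph.isNClique_singleton.mpr rfl)
      omega
    have h0 : T.toDig.dichi ≤ 0 :=
      Nat.sInf_le ⟨fun v => isEmptyElim v, fun i v => isEmptyElim v⟩
    simpa [Fb] using h0
  | succ w ih =>
    intro V iV T hfree hw
    classical
    by_cases hcw : T.toDig.cliqueNum ≤ w
    · exact le_trans (ih V T hfree hcw) (Fb_le_succ _ _ _ _)
    by_cases hch : ChiLeOn T Set.univ (f₁ (w+1))
    · refine le_trans (dichi_le_of_chiLeOn_univ hch) ?_
      simp only [Fb]
      omega
    have hNV : Nonempty V := by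
      by_contra hne
      rw [not_nonempty_iff] at hne
      exact hch ⟨fun _ => 0, fun v _ => isEmptyElim v, fun i v => isEmptyElim v⟩
    have hset : {m | ∃ r : V → V → Prop, IsStrictTotalOrder V r ∧
        gOmega (T.toDig.backedge r) = m}.Nonempty := by
      obtain ⟨r, hr⟩ := exists_sto V
      exact ⟨_, r, hr, rfl⟩
    obtain ⟨r, hr, hgr⟩ := Nat.sInf_mem hset
    have hgr' : gOmega (T.toDig.backedge r) = T.toDig.cliqueNum := hgr
    letI := hr
    -- the minimal "bad prefix" point
    have hAne : ((Set.toFinite {x : V | ¬ ChiLeOn T {u | r u x ∨ u = x} (f₁ (w+1))}).toFinset).Nonempty := by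
      rw [Set.Finite.toFinset_nonempty]
      obtain ⟨xm, _, hxm⟩ := exists_rmax hr Finset.univ Finset.univ_nonempty
      refine ⟨xm, ?_⟩
      intro hcon
      apply hch
      have huniv : {u : V | r u xm ∨ u = xm} = Set.univ := by
        ext u
        simp only [Set.mem_setOf_eq, Set.mem_univ, iff_true]
        by_cases h : u = xm
        · exact Or.inr h
        · exact Or.inl (hxm u (Finset.mem_univ u) h)
      rwa [huniv] at hcon
    obtain ⟨x, hxA, hxmin⟩ := exists_rmin hr _ hAne
    have hxA' : x ∈ {x : V | ¬ ChiLeOn T {u | r u x ∨ u = x} (f₁ (w+1))} :=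
      (Set.Finite.mem_toFinset _).mp hxA
    have hPn : ¬ ChiLeOn T {u | r u x ∨ u = x} (f₁ (w+1)) := hxA'
    -- bound for the strict prefix
    have hP'chi : ChiLeOn T {u | r u x} (f₁ (w+1)) := by
      rcases Set.eq_empty_or_nonempty {u : V | r u x} with he | hne
      · rw [he]
        exact chiLeOn_empty T _
      · obtain ⟨y, hy, hymax⟩ := exists_rmax hr (Set.toFinite {u : V | r u x}).toFinset
          ((Set.Finite.toFinset_nonempty _).mpr hne)
        have hy'' : y ∈ {u : V | r u x} := (Set.Finite.mem_toFinset _).mp hy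
        have hy' : r y x := hy''
        have hyA : ¬ ¬ ChiLeOn T {u | r u y ∨ u = y} (f₁ (w+1)) := by
          intro hyA
          have hyx : y ≠ x := fun e => irrefl_of r x (e ▸ hy')
          have hxy := hxmin y ((Set.Finite.mem_toFinset _).mpr hyA) hyx
          exact irrefl_of r x (trans_of r hxy hy')
        have hSy := not_not.mp hyA
        have hEq : {u : V | r u y ∨ u = y} = {u : V | r u x} := by
          ext u
          simp only [Set.mem_setOf_eq]
          constructor
          · rintro (h | rfl)
            · exact trans_of r h hy'
            · exact hy'
          · intro h
            by_cases huy : u = y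
            · exact Or.inr huy
            · exact Or.inl (hymax u ((Set.Finite.mem_toFinset _).mpr h) huy)
        rwa [hEq] at hSy
    have hPchi : ChiLeOn T {u | r u x ∨ u = x} (f₁ (w+1) + 1) := by
      have hPeq : {u : V | r u x ∨ u = x} = {u | r u x} ∪ {x} := by
        ext u
        simp only [Set.mem_setOf_eq, Set.mem_union, Set.mem_singleton_iff]
      rw [hPeq]
      exact chiLeOn_union hP'chi (chiLeOn_subsingleton Set.subsingleton_singleton)
    -- extract a copy of H₁ inside the prefix
    haveI : Fintype ({u : V | r u x ∨ u = x} : Set V) := Fintype.ofFinite _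
    have hPfree : ¬ HFree H₁ (T.induce {u | r u x ∨ u = x}) := by
      intro hf
      apply hPn
      refine chiLeOn_of_le (chiLeOn_of_induce T _) ?_
      refine le_trans (hb₁ _ (T.induce _) hf) (hm₁ ?_)
      exact le_trans (hgr' ▸ cliqueNum_restrict_le T _ hr) hw
    obtain ⟨e₁, he₁⟩ := not_not.mp hPfree
    set E : W₁ ↪ V := e₁.trans (Function.Embedding.subtype _) with hEdef
    have hEadj : ∀ a b, H₁.Adj a b ↔ T.Adj (E a) (E b) := fun a b => he₁ a b
    have hEP : ∀ a, r (E a) x ∨ E a = x := fun a => (e₁ a).2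
    -- the dominated set M
    haveI : Fintype ({v : V | ∀ a, T.Adj (E a) v} : Set V) := Fintype.ofFinite _
    have hMfree : HFree H₂ (T.induce {v | ∀ a, T.Adj (E a) v}) :=
      hfree_dominated H₁ H₂ hfree E hEadj
    have hMchi : ChiLeOn T {v | ∀ a, T.Adj (E a) v} (f₂ (w+1)) := by
      refine chiLeOn_of_le (chiLeOn_of_induce T _) ?_
      refine le_trans (hb₂ _ (T.induce _) hMfree) (hm₂ ?_)
      exact le_trans (hgr' ▸ cliqueNum_restrict_le T _ hr) hw
    -- the back sets Q a
    have hQchi : ∀ a : W₁, ChiLeOn T {v | T.Adj v (E a) ∧ r (E a) v}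
        (Fb f₁ f₂ (Fintype.card W₁) w) := by
      intro a
      haveI : Fintype ({v : V | T.Adj v (E a) ∧ r (E a) v} : Set V) := Fintype.ofFinite _
      refine chiLeOn_of_le (chiLeOn_of_induce T _) ?_
      refine ih _ (T.induce _) (hfree.induce _) ?_
      have hlt := cliqueNum_dom_lt T {v | T.Adj v (E a) ∧ r (E a) v} hr (E a) (fun v hv => hv)
      rw [hgr'] at hlt
      omega
    -- covering
    have hcover : Set.univ ⊆ {u | r u x ∨ u = x} ∪ ({v | ∀ a, T.Adj (E a) v} ∪
        ⋃ a ∈ (Finset.univ : Finset W₁), {v | T.Adj v (E a) ∧ r (E a) v}) := by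
      intro v _
      by_cases hvP : v ∈ {u : V | r u x ∨ u = x}
      · exact Or.inl hvP
      by_cases hvQ : ∃ a, T.Adj v (E a) ∧ r (E a) v
      · obtain ⟨a, ha⟩ := hvQ
        exact Or.inr (Or.inr (Set.mem_biUnion (Finset.mem_univ a) ha))
      · refine Or.inr (Or.inl ?_)
        intro a
        have hvc : v ≠ E a := by
          intro e
          exact hvP (e ▸ hEP a)
        have hrv : r (E a) v := by
          rcases trichotomous_of r v (E a) with h | h | h
          · exfalso
            apply hvP
            rcases hEP a with h' | h'
            · exact Or.inl (trans_of r h h')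
            · exact Or.inl (h' ▸ h)
          · exact absurd h hvc
          · exact h
        have hnadj : ¬ T.Adj v (E a) := fun hadj => hvQ ⟨a, hadj, hrv⟩
        rcases T.total (E a) v (fun e => hvc e.symm) with h | h
        · exact h
        · exact absurd h hnadj
    have hbig : ChiLeOn T ({u | r u x ∨ u = x} ∪ ({v | ∀ a, T.Adj (E a) v} ∪
        ⋃ a ∈ (Finset.univ : Finset W₁), {v | T.Adj v (E a) ∧ r (E a) v}))
        ((f₁ (w+1) + 1) + (f₂ (w+1) +
          ∑ _a ∈ (Finset.univ : Finset W₁), Fb f₁ f₂ (Fintype.card W₁) w)) :=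
      chiLeOn_union hPchi (chiLeOn_union hMchi
        (chiLeOn_biUnion _ _ Finset.univ (fun a _ => hQchi a)))
    have hfinal := dichi_le_of_chiLeOn_univ (chiLeOn_mono hcover hbig)
    refine le_trans hfinal ?_
    rw [Finset.sum_const, Finset.card_univ, smul_eq_mul]
    have hX : Fintype.card W₁ * Fb f₁ f₂ (Fintype.card W₁) w ≤
        (Fintype.card W₁ + 1) * Fb f₁ f₂ (Fintype.card W₁) w :=
      Nat.mul_le_mul_right _ (Nat.le_succ _)
    simp only [Fb]
    omega

end MainProof


/-- If `H₁` and `H₂` are χ⃗-binding, then so is `H₁ ⇒ H₂`. -/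
theorem stmt_14 (W₁ W₂ : Type) [Fintype W₁] [Fintype W₂]
    (H₁ : Tournament W₁) (H₂ : Tournament W₂)
    (h₁ : ChiBinding H₁) (h₂ : ChiBinding H₂) : ChiBinding (H₁.seq H₂) := by
  obtain ⟨f₁, hb₁⟩ := h₁
  obtain ⟨f₂, hb₂⟩ := h₂
  have hm₁ : ∀ {k n : ℕ}, k ≤ n → (fun n => ∑ j ∈ Finset.range (n+1), f₁ j) k ≤
      (fun n => ∑ j ∈ Finset.range (n+1), f₁ j) n := by
    intro k n hkn
    exact Finset.sum_le_sum_of_subset (Finset.range_subset_range.mpr (by omega))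
  have hm₂ : ∀ {k n : ℕ}, k ≤ n → (fun n => ∑ j ∈ Finset.range (n+1), f₂ j) k ≤
      (fun n => ∑ j ∈ Finset.range (n+1), f₂ j) n := by
    intro k n hkn
    exact Finset.sum_le_sum_of_subset (Finset.range_subset_range.mpr (by omega))
  have hb₁' : ∀ (V : Type) [Fintype V] (T : Tournament V), HFree H₁ T →
      T.toDig.dichi ≤ (fun n => ∑ j ∈ Finset.range (n+1), f₁ j) T.toDig.cliqueNum := by
    intro V _ T hf
    refine le_trans (hb₁ V T hf) ?_
    exact Finset.single_le_sum (fun j _ => Nat.zero_le _)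
      (Finset.mem_range.mpr (Nat.lt_succ_self _))
  have hb₂' : ∀ (V : Type) [Fintype V] (T : Tournament V), HFree H₂ T →
      T.toDig.dichi ≤ (fun n => ∑ j ∈ Finset.range (n+1), f₂ j) T.toDig.cliqueNum := by
    intro V _ T hf
    refine le_trans (hb₂ V T hf) ?_
    exact Finset.single_le_sum (fun j _ => Nat.zero_le _)
      (Finset.mem_range.mpr (Nat.lt_succ_self _))
  refine ⟨Fb (fun n => ∑ j ∈ Finset.range (n+1), f₁ j)
    (fun n => ∑ j ∈ Finset.range (n+1), f₂ j) (Fintype.card W₁), ?_⟩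
  intro V _ T hf
  exact key_bound H₁ H₂ _ _ hm₁ hm₂ hb₁' hb₂' T.toDig.cliqueNum V T hf le_rfl
end

section
/- For every digraph D and every total order ≺ on V(D), the following two inequalities hold: χ⃗(D) ≤ χ(D^≺) and χ(D^≺) ≤ R(ω(D^≺)+1, α(D)+1) · χ⃗(D), where R(i, j) denotes the Ramsey number. -/
variable {V : Type*}

/-- The Ramsey number `R i j`: the least `n` such that every graph on `n` vertices contains
a clique of size `j` or an independent set of size `i`. -/
noncomputable def ramsey (i j : ℕ) : ℕ :=
  sInf {n | ∀ G : SimpleGraph (Fin n),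
    (∃ s : Finset (Fin n), G.IsNClique j s) ∨
    (∃ s : Finset (Fin n), s.card = i ∧ ∀ a ∈ s, ∀ b ∈ s, a ≠ b → ¬ G.Adj a b)}

/-- The independence number of a digraph: the maximum size of a set of pairwise
non-adjacent vertices. -/
noncomputable def Dig.alpha (D : Dig V) : ℕ :=
  sSup {m | ∃ s : Finset V, s.card = m ∧ ∀ a ∈ s, ∀ b ∈ s, ¬ D.Adj a b}

/- ### Auxiliary: finite Ramsey theorem -/

def RamseyProp (i j n : ℕ) : Prop :=
  ∀ G : SimpleGraph (Fin n),
    (∃ s : Finset (Fin n), G.IsNClique j s) ∨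
    (∃ s : Finset (Fin n), s.card = i ∧ ∀ a ∈ s, ∀ b ∈ s, a ≠ b → ¬ G.Adj a b)

lemma clique_map {n m j : ℕ} (G : SimpleGraph (Fin m)) (f : Fin n → Fin m) (hf : Function.Injective f)
    (s : Finset (Fin n)) (h : (G.comap f).IsNClique j s) :
    G.IsNClique j (s.image f) := by
  constructor
  · intro a ha b hb hab
    simp only [Finset.coe_image, Set.mem_image, Finset.mem_coe] at ha hb
    obtain ⟨x, hx, rfl⟩ := ha
    obtain ⟨y, hy, rfl⟩ := hb
    have hxy : x ≠ y := fun e => hab (by rw [e])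
    exact h.1 hx hy hxy
  · rw [Finset.card_image_of_injective _ hf]; exact h.2

lemma indep_map {n m i : ℕ} (G : SimpleGraph (Fin m)) (f : Fin n → Fin m) (hf : Function.Injective f)
    (s : Finset (Fin n)) (hcard : s.card = i)
    (h : ∀ a ∈ s, ∀ b ∈ s, a ≠ b → ¬ (G.comap f).Adj a b) :
    (s.image f).card = i ∧ ∀ a ∈ s.image f, ∀ b ∈ s.image f, a ≠ b → ¬ G.Adj a b := by
  refine ⟨by rw [Finset.card_image_of_injective _ hf, hcard], ?_⟩
  intro a ha b hb hab
  simp only [Finset.mem_image] at ha hb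
  obtain ⟨x, hx, rfl⟩ := ha
  obtain ⟨y, hy, rfl⟩ := hb
  exact h x hx y hy (fun e => hab (by rw [e]))

lemma exists_inj_into {N m : ℕ} (s : Finset (Fin N)) (h : m ≤ s.card) :
    ∃ f : Fin m → Fin N, Function.Injective f ∧ ∀ a, f a ∈ s := by
  obtain ⟨t, hts, htc⟩ := Finset.exists_subset_card_eq h
  refine ⟨fun a => (t.orderIsoOfFin htc a : Fin N), ?_, ?_⟩
  · intro a b hab
    have := Subtype.ext hab
    exact (t.orderIsoOfFin htc).injective this
  · intro a; exact hts (t.orderIsoOfFin htc a).2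

lemma ramsey_exists : ∀ k i j : ℕ, i + j ≤ k → 0 < i → 0 < j → ∃ n, 0 < n ∧ RamseyProp i j n := by
  intro k
  induction k with
  | zero => intro i j h hi hj; omega
  | succ k ih =>
    intro i j h hi hj
    rcases Nat.eq_or_lt_of_le hi with hi1 | hi2
    · refine ⟨1, one_pos, fun G => Or.inr ⟨{0}, by simp [← hi1], ?_⟩⟩
      intro a ha b hb hab
      simp only [Finset.mem_singleton] at ha hb
      exact absurd (ha.trans hb.symm) hab
    rcases Nat.eq_or_lt_of_le hj with hj1 | hj2
    · refine ⟨1, one_pos, fun G => Or.inl ⟨{0}, ?_, by simp [← hj1]⟩⟩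
      intro a ha b hb hab
      simp only [Finset.coe_singleton, Set.mem_singleton_iff] at ha hb
      exact absurd (ha.trans hb.symm) hab
    obtain ⟨n₁, hn₁pos, hn₁⟩ := ih (i - 1) j (by omega) (by omega) hj
    obtain ⟨n₂, hn₂pos, hn₂⟩ := ih i (j - 1) (by omega) hi (by omega)
    refine ⟨n₁ + n₂ + 1, by omega, ?_⟩
    intro G
    classical
    set N : Finset (Fin (n₁ + n₂ + 1)) := Finset.univ.filter (fun u => G.Adj 0 u) with hN
    set M : Finset (Fin (n₁ + n₂ + 1)) := Finset.univ.filter (fun u => u ≠ 0 ∧ ¬ G.Adj 0 u) with hM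
    have hcard : N.card + M.card = n₁ + n₂ := by
      have hdisj : Disjoint N M := by
        rw [Finset.disjoint_left]
        intro a haN haM
        simp only [hN, hM, Finset.mem_filter] at haN haM
        exact haM.2.2 haN.2
      have hunion : N ∪ M = Finset.univ.erase 0 := by
        ext a
        simp only [hN, hM, Finset.mem_union, Finset.mem_filter, Finset.mem_univ, true_and,
          Finset.mem_erase, and_true]
        constructor
        · rintro (h | h)
          · exact fun e => G.irrefl (e ▸ h)
          · exact h.1
        · intro ha
          by_cases hadj : G.Adj 0 a
          · exact Or.inl hadj
          · exact Or.inr ⟨ha, hadj⟩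
      have := Finset.card_union_of_disjoint hdisj
      rw [hunion, Finset.card_erase_of_mem (Finset.mem_univ _)] at this
      simp only [Finset.card_univ, Fintype.card_fin] at this
      omega
    by_cases hNbig : n₂ ≤ N.card
    · obtain ⟨f, hfinj, hfmem⟩ := exists_inj_into N hNbig
      rcases hn₂ (G.comap f) with ⟨s, hs⟩ | ⟨s, hsc, hsi⟩
      · left
        refine ⟨insert 0 (s.image f), ?_, ?_⟩
        · intro a ha b hb hab
          simp only [Finset.coe_insert, Set.mem_insert_iff, Finset.coe_image, Set.mem_image,
            Finset.mem_coe] at ha hb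
          have hadj0 : ∀ x ∈ s, G.Adj 0 (f x) := by
            intro x _
            have := hfmem x
            simp only [hN, Finset.mem_filter] at this
            exact this.2
          rcases ha with rfl | ⟨x, hx, rfl⟩
          · rcases hb with rfl | ⟨y, hy, rfl⟩
            · exact absurd rfl hab
            · exact hadj0 y hy
          · rcases hb with rfl | ⟨y, hy, rfl⟩
            · exact (hadj0 x hx).symm
            · exact hs.1 hx hy (fun e => hab (by rw [e]))
        · have h0 : (0 : Fin (n₁+n₂+1)) ∉ s.image f := by
            intro h0
            simp only [Finset.mem_image] at h0
            obtain ⟨x, hx, hfx⟩ := h0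
            have := hfmem x
            simp only [hN, Finset.mem_filter, hfx] at this
            exact G.irrefl this.2
          rw [Finset.card_insert_of_notMem h0, Finset.card_image_of_injective _ hfinj, hs.2]
          omega
      · right
        exact ⟨s.image f, (indep_map G f hfinj s hsc hsi).1, (indep_map G f hfinj s hsc hsi).2⟩
    · have hMbig : n₁ ≤ M.card := by omega
      obtain ⟨f, hfinj, hfmem⟩ := exists_inj_into M hMbig
      rcases hn₁ (G.comap f) with ⟨s, hs⟩ | ⟨s, hsc, hsi⟩
      · left
        exact ⟨s.image f, clique_map G f hfinj s hs⟩
      · right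
        have hprop : ∀ x ∈ s, f x ≠ 0 ∧ ¬ G.Adj 0 (f x) := by
          intro x _
          have := hfmem x
          simp only [hM, Finset.mem_filter] at this
          exact this.2
        have h0 : (0 : Fin (n₁+n₂+1)) ∉ s.image f := by
          intro h0
          simp only [Finset.mem_image] at h0
          obtain ⟨x, hx, hfx⟩ := h0
          exact (hprop x hx).1 hfx
        refine ⟨insert 0 (s.image f), ?_, ?_⟩
        · rw [Finset.card_insert_of_notMem h0, Finset.card_image_of_injective _ hfinj, hsc]
          omega
        · intro a ha b hb hab
          simp only [Finset.mem_insert, Finset.mem_image] at ha hb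
          rcases ha with rfl | ⟨x, hx, rfl⟩
          · rcases hb with rfl | ⟨y, hy, rfl⟩
            · exact absurd rfl hab
            · exact (hprop y hy).2
          · rcases hb with rfl | ⟨y, hy, rfl⟩
            · exact fun hadj => (hprop x hx).2 hadj.symm
            · exact hsi x hx y hy (fun e => hab (by rw [e]))

/- ### Height function machinery -/

def Brel (D : Dig V) (r : V → V → Prop) {k : ℕ} (c : V → Fin k) (x y : V) : Prop :=
  c x = c y ∧ D.Adj x y ∧ r y x

def chainSet (D : Dig V) (r : V → V → Prop) {k : ℕ} (c : V → Fin k) (v : V) : Set ℕ :=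
  {m | ∃ f : ℕ → V, f m = v ∧ ∀ i < m, Brel D r c (f i) (f (i+1))}

noncomputable def hgt (D : Dig V) (r : V → V → Prop) {k : ℕ} (c : V → Fin k) (v : V) : ℕ :=
  sSup (chainSet D r c v)

lemma bTG_spec (D : Dig V) (r : V → V → Prop) (htr : Transitive r) {k : ℕ} (c : V → Fin k)
    (x y : V) (hxy : Relation.TransGen (Brel D r c) x y) :
    c x = c y ∧ r y x ∧ Relation.TransGen
      (fun a b => a ∈ {w | c w = c x} ∧ b ∈ {w | c w = c x} ∧ D.Adj a b) x y := by
  induction hxy with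
  | single h =>
    exact ⟨h.1, h.2.2, Relation.TransGen.single ⟨rfl, h.1.symm, h.2.1⟩⟩
  | @tail b y h1 h2 ih =>
    exact ⟨ih.1.trans h2.1, htr h2.2.2 ih.2.1,
      ih.2.2.tail ⟨ih.1.symm, (ih.1.trans h2.1).symm, h2.2.1⟩⟩

lemma bnocyc (D : Dig V) (r : V → V → Prop) (htr : Transitive r) {k : ℕ} (c : V → Fin k)
    (hc : ∀ i, D.AcyclicOn {v | c v = i}) (x : V) :
    ¬ Relation.TransGen (Brel D r c) x x :=
  fun h => hc (c x) x (bTG_spec D r htr c x x h).2.2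

lemma chainTG (D : Dig V) (r : V → V → Prop) {k : ℕ} (c : V → Fin k)
    (f : ℕ → V) (m : ℕ) (hf : ∀ i < m, Brel D r c (f i) (f (i+1))) :
    ∀ i j, i < j → j ≤ m → Relation.TransGen (Brel D r c) (f i) (f j) := by
  intro i j
  induction j with
  | zero => omega
  | succ j ihj =>
    intro hij hjm
    rcases Nat.lt_or_ge i j with hlt | hge
    · exact (ihj hlt (by omega)).tail (hf j (by omega))
    · have hij' : i = j := by omega
      subst hij'
      exact Relation.TransGen.single (hf i (by omega))

lemma chainSet_bdd [Fintype V] (D : Dig V) (r : V → V → Prop) (htr : Transitive r)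
    {k : ℕ} (c : V → Fin k) (hc : ∀ i, D.AcyclicOn {v | c v = i}) (v : V) :
    ∀ m ∈ chainSet D r c v, m < Fintype.card V := by
  intro m hm
  obtain ⟨f, hfm, hf⟩ := hm
  by_contra hge
  push_neg at hge
  have hinj : Function.Injective (fun i : Fin (m+1) => f i) := by
    intro a b hab
    simp only at hab
    by_contra hne
    have hne' : (a : ℕ) ≠ (b : ℕ) := fun e => hne (Fin.ext e)
    rcases Nat.lt_or_ge (a : ℕ) (b : ℕ) with hlt | hge2
    · exact bnocyc D r htr c hc (f a) (hab ▸ chainTG D r c f m hf a b hlt (by omega))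
    · exact bnocyc D r htr c hc (f b) (hab ▸ chainTG D r c f m hf b a (by omega) (by omega))
  have := Fintype.card_le_of_injective _ hinj
  simp only [Fintype.card_fin] at this
  omega

lemma hgt_mem [Fintype V] (D : Dig V) (r : V → V → Prop) (htr : Transitive r)
    {k : ℕ} (c : V → Fin k) (hc : ∀ i, D.AcyclicOn {v | c v = i}) (v : V) :
    hgt D r c v ∈ chainSet D r c v :=
  Nat.sSup_mem ⟨0, fun _ => v, rfl, by omega⟩
    ⟨Fintype.card V, fun m hm => le_of_lt (chainSet_bdd D r htr c hc v m hm)⟩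

lemma hgt_step [Fintype V] (D : Dig V) (r : V → V → Prop) (htr : Transitive r)
    {k : ℕ} (c : V → Fin k) (hc : ∀ i, D.AcyclicOn {v | c v = i}) (u v : V)
    (huv : Brel D r c u v) : hgt D r c u < hgt D r c v := by
  obtain ⟨f, hfm, hf⟩ := hgt_mem D r htr c hc u
  have hmem : hgt D r c u + 1 ∈ chainSet D r c v := by
    refine ⟨fun i => if i ≤ hgt D r c u then f i else v, by simp, ?_⟩
    intro i hi
    rcases Nat.lt_or_ge i (hgt D r c u) with hlt | hge
    · simpa only [if_pos (le_of_lt hlt), if_pos (Nat.succ_le_of_lt hlt)] using hf i hlt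
    · have hieq : i = hgt D r c u := by omega
      show Brel D r c (if i ≤ hgt D r c u then f i else v)
        (if i + 1 ≤ hgt D r c u then f (i+1) else v)
      rw [if_pos (le_of_eq hieq), if_neg (by omega : ¬ i + 1 ≤ hgt D r c u), hieq, hfm]
      exact huv
  have := le_csSup ⟨Fintype.card V, fun m hm =>
    le_of_lt (chainSet_bdd D r htr c hc v m hm)⟩ hmem
  exact Nat.lt_of_succ_le this

lemma hgt_lt [Fintype V] (D : Dig V) (r : V → V → Prop) (htr : Transitive r)
    {k : ℕ} (c : V → Fin k) (hc : ∀ i, D.AcyclicOn {v | c v = i})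
    (om al R : ℕ) (hRam : RamseyProp (om + 1) (al + 1) R)
    (hom : ∀ s : Finset V, ¬ (D.backedge r).IsNClique (om + 1) s)
    (hal : ∀ s : Finset V, ¬ (s.card = al + 1 ∧ ∀ a ∈ s, ∀ b ∈ s, ¬ D.Adj a b))
    (v : V) : hgt D r c v < R := by
  by_contra hge
  push_neg at hge
  obtain ⟨f, hfm, hf⟩ := hgt_mem D r htr c hc v
  have hwTG : ∀ i j : Fin R, (i : ℕ) < (j : ℕ) →
      Relation.TransGen (Brel D r c) (f i) (f j) := by
    intro i j hij
    exact chainTG D r c f (hgt D r c v) hf i j hij (by omega)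
  have hwinj : Function.Injective (fun i : Fin R => f i) := by
    intro a b hab
    simp only at hab
    by_contra hne
    have hne' : (a : ℕ) ≠ (b : ℕ) := fun e => hne (Fin.ext e)
    rcases Nat.lt_or_ge (a : ℕ) (b : ℕ) with hlt | hge2
    · exact bnocyc D r htr c hc (f a) (hab ▸ hwTG a b hlt)
    · exact bnocyc D r htr c hc (f b) (hab ▸ hwTG b a (by omega))
  have hwr : ∀ i j : Fin R, (i : ℕ) < (j : ℕ) → r (f j) (f i) :=
    fun i j hij => (bTG_spec D r htr c _ _ (hwTG i j hij)).2.1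
  have hwnadj : ∀ i j : Fin R, (i : ℕ) < (j : ℕ) → ¬ D.Adj (f j) (f i) := by
    intro i j hij hadj
    have t := bTG_spec D r htr c _ _ (hwTG i j hij)
    exact hc (c (f i)) (f i) (t.2.2.tail ⟨t.1.symm, rfl, hadj⟩)
  have hwback : ∀ i j : Fin R, (i : ℕ) < (j : ℕ) → D.Adj (f i) (f j) →
      (D.backedge r).Adj (f i) (f j) := by
    intro i j hij hadj
    exact Or.inr ⟨hwr i j hij, hadj⟩
  classical
  rcases hRam
    { Adj := fun a b => a ≠ b ∧ ¬ D.Adj (f a) (f b) ∧ ¬ D.Adj (f b) (f a)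
      symm := ⟨by intro a b hab; exact ⟨hab.1.symm, hab.2.2, hab.2.1⟩⟩
      loopless := ⟨by intro a ha; exact ha.1 rfl⟩ } with ⟨s, hs⟩ | ⟨s, hsc, hsi⟩
  · -- clique of size al+1 in auxiliary graph → independent set of size al+1 in D
    apply hal (s.image (fun i : Fin R => f i))
    constructor
    · rw [Finset.card_image_of_injective _ hwinj, hs.2]
    · intro a ha b hb
      simp only [Finset.mem_image] at ha hb
      obtain ⟨x, hx, rfl⟩ := ha
      obtain ⟨y, hy, rfl⟩ := hb
      by_cases hxy : x = y
      · subst hxy; exact D.irrefl _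
      · exact (hs.1 hx hy hxy).2.1
  · -- independent set of size om+1 in auxiliary graph → clique of size om+1 in backedge graph
    apply hom (s.image (fun i : Fin R => f i))
    constructor
    · intro a ha b hb hab
      simp only [Finset.coe_image, Set.mem_image, Finset.mem_coe] at ha hb
      obtain ⟨x, hx, rfl⟩ := ha
      obtain ⟨y, hy, rfl⟩ := hb
      have hxy : x ≠ y := fun e => hab (by rw [e])
      have hD : D.Adj (f x) (f y) ∨ D.Adj (f y) (f x) := by
        by_contra hcon
        push_neg at hcon
        exact hsi x hx y hy hxy ⟨hxy, hcon.1, hcon.2⟩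
      rcases Nat.lt_or_ge (x : ℕ) (y : ℕ) with hlt2 | hge2
      · have hD' : D.Adj (f x) (f y) := by
          rcases hD with hD | hD
          · exact hD
          · exact absurd hD (hwnadj x y hlt2)
        exact hwback x y hlt2 hD'
      · have hlt2 : (y : ℕ) < (x : ℕ) := by
          rcases Nat.lt_or_ge (y : ℕ) (x : ℕ) with h1 | h1
          · exact h1
          · exact absurd (Fin.ext (by omega)) hxy
        have hD' : D.Adj (f y) (f x) := by
          rcases hD with hD | hD
          · exact absurd hD (hwnadj y x hlt2)
          · exact hD
        exact (hwback y x hlt2 hD').symm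
    · rw [Finset.card_image_of_injective _ hwinj, hsc]

/- ### Main theorem -/


/-- For every digraph `D` and total order `r` on its vertices,
`χ⃗(D) ≤ χ(D^r)` and `χ(D^r) ≤ R(ω(D^r)+1, α(D)+1) · χ⃗(D)`. -/
theorem stmt_19 (V : Type) [Fintype V] (D : Dig V) (r : V → V → Prop)
    (hr : IsStrictTotalOrder V r) :
    D.dichi ≤ gChi (D.backedge r) ∧
      gChi (D.backedge r) ≤ ramsey (gOmega (D.backedge r) + 1) (D.alpha + 1) * D.dichi := by
  haveI := hr
  classical
  have htr : Transitive r := fun a b c hab hbc => trans_of r hab hbc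
  constructor
  · -- part 1 : dichi ≤ chi of backedge graph
    have hne : {n | (D.backedge r).Colorable n}.Nonempty :=
      ⟨Fintype.card V, (D.backedge r).colorable_of_fintype⟩
    obtain ⟨C⟩ := Nat.sInf_mem hne
    apply Nat.sInf_le
    refine ⟨C, fun i v hcyc => ?_⟩
    have key : ∀ x y, Relation.TransGen
        (fun a b => a ∈ {w | C w = i} ∧ b ∈ {w | C w = i} ∧ D.Adj a b) x y → r x y := by
      have hstep : ∀ a b, (a ∈ {w | C w = i} ∧ b ∈ {w | C w = i} ∧ D.Adj a b) → r a b := by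
        intro a b ⟨ha, hb, hadj⟩
        have hnadj : ¬ (D.backedge r).Adj a b := by
          intro hadj'
          exact C.valid hadj' (by simp only [Set.mem_setOf_eq] at ha hb; rw [ha, hb])
        rcases trichotomous_of r a b with h1 | h1 | h1
        · exact h1
        · exact absurd (h1 ▸ hadj) (D.irrefl _)
        · exact absurd (Or.inr ⟨h1, hadj⟩) hnadj
      intro x y hxy
      induction hxy with
      | single h => exact hstep _ _ h
      | tail h1 h2 ih => exact trans_of r ih (hstep _ _ h2)
    exact irrefl_of r v (key v v hcyc)
  · -- part 2
    -- a colouring with dichi colours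
    have hdne : {n | ∃ c : V → Fin n, ∀ i, D.AcyclicOn {v | c v = i}}.Nonempty := by
      refine ⟨Fintype.card V, Fintype.equivFin V, fun i v hv => ?_⟩
      have hemp : ∀ x y, (x ∈ {w | (Fintype.equivFin V) w = i} ∧
          y ∈ {w | (Fintype.equivFin V) w = i} ∧ D.Adj x y) → False := by
        intro x y ⟨hx, hy, hadj⟩
        have hxy : x = y := (Fintype.equivFin V).injective (hx.trans hy.symm)
        exact D.irrefl _ (hxy ▸ hadj)
      cases hv with
      | single h => exact hemp _ _ h
      | tail h1 h2 => exact hemp _ _ h2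
    obtain ⟨c, hc⟩ := Nat.sInf_mem hdne
    -- Ramsey property at R := ramsey (om+1) (al+1)
    have hRmem : RamseyProp (gOmega (D.backedge r) + 1) (D.alpha + 1)
        (ramsey (gOmega (D.backedge r) + 1) (D.alpha + 1)) := by
      obtain ⟨n, _, hn⟩ := ramsey_exists ((gOmega (D.backedge r) + 1) + (D.alpha + 1))
        (gOmega (D.backedge r) + 1) (D.alpha + 1) le_rfl (Nat.succ_pos _) (Nat.succ_pos _)
      exact Nat.sInf_mem (⟨n, hn⟩ : Set.Nonempty {n | RamseyProp _ _ n})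
    -- no clique of size om+1
    have hom : ∀ s : Finset V, ¬ (D.backedge r).IsNClique (gOmega (D.backedge r) + 1) s := by
      intro s hs
      have hbdd : BddAbove {n | ∃ s : Finset V, (D.backedge r).IsNClique n s} := by
        refine ⟨Fintype.card V, fun m hm => ?_⟩
        obtain ⟨t, ht⟩ := hm
        rw [← ht.2]; exact t.card_le_univ.trans_eq Finset.card_univ
      have h1 : gOmega (D.backedge r) + 1 ≤ gOmega (D.backedge r) :=
        le_csSup hbdd ⟨s, hs⟩
      omega
    -- no independent set of size al+1
    have hal : ∀ s : Finset V, ¬ (s.card = D.alpha + 1 ∧ ∀ a ∈ s, ∀ b ∈ s, ¬ D.Adj a b) := by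
      intro s hs
      have hbdd : BddAbove {m | ∃ s : Finset V, s.card = m ∧ ∀ a ∈ s, ∀ b ∈ s, ¬ D.Adj a b} := by
        refine ⟨Fintype.card V, fun m hm => ?_⟩
        obtain ⟨t, ht, _⟩ := hm
        rw [← ht]; exact t.card_le_univ.trans_eq Finset.card_univ
      have h1 : D.alpha + 1 ≤ D.alpha := le_csSup hbdd ⟨s, hs.1, hs.2⟩
      omega
    have hlt : ∀ v, hgt D r c v < ramsey (gOmega (D.backedge r) + 1) (D.alpha + 1) :=
      hgt_lt D r htr c hc _ _ _ hRmem hom hal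
    have hcol : (D.backedge r).Colorable
        (D.dichi * ramsey (gOmega (D.backedge r) + 1) (D.alpha + 1)) := by
      refine ⟨SimpleGraph.Coloring.mk (fun v => finProdFinEquiv (c v, ⟨hgt D r c v, hlt v⟩)) ?_⟩
      intro u v hadj heq
      have hpair : ((c u, ⟨hgt D r c u, hlt u⟩) :
          Fin (D.dichi) × Fin (ramsey (gOmega (D.backedge r) + 1) (D.alpha + 1))) =
          (c v, ⟨hgt D r c v, hlt v⟩) := finProdFinEquiv.injective heq
      have hcuv : c u = c v := congrArg Prod.fst hpair
      have hhuv : hgt D r c u = hgt D r c v := by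
        have := congrArg Prod.snd hpair
        exact congrArg Fin.val this
      rcases hadj with ⟨h1, h2⟩ | ⟨h1, h2⟩
      · have := hgt_step D r htr c hc v u ⟨hcuv.symm, h2, h1⟩
        rw [hhuv] at this
        exact Nat.lt_irrefl _ this
      · have := hgt_step D r htr c hc u v ⟨hcuv, h2, h1⟩
        rw [hhuv] at this
        exact Nat.lt_irrefl _ this
    apply Nat.sInf_le
    show (D.backedge r).Colorable _
    rwa [mul_comm] at hcol
end
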